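/- Let X be the set of all ultrametric norms on a finite-dimensional vector space V over a spherically complete non-Archimedean valued field 𝕂. Then closed balls in (X, d), where d is the Goldman–Iwahori metric, satisfy the Helly property: any family of pairwise intersecting closed balls has nonempty global intersection. -/

import Mathlib

def IsUltraNorm (𝕂 : Type*) [NormedField 𝕂] {V : Type*} [AddCommGroup V] [Module 𝕂 V]
    (η : V → ℝ) : Prop :=
  (∀ v, 0 ≤ η v) ∧ (∀ v, η v = 0 ↔ v = 0) ∧
    (∀ (α : 𝕂) (v : V), η (α • v) = ‖α‖ * η v) ∧ ∀ u v, η (u + v) ≤ max (η u) (η v)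

noncomputable def GIdist {V : Type*} [Zero V] (η η' : V → ℝ) : ℝ :=
  ⨆ v : {v : V // v ≠ 0}, |Real.log (η v.1 / η' v.1)|

/-- `𝕂` is spherically complete: every decreasing sequence of closed balls has
nonempty intersection. -/
def SphericallyComplete (𝕂 : Type*) [PseudoMetricSpace 𝕂] : Prop :=
  ∀ (c : ℕ → 𝕂) (r : ℕ → ℝ),
    (∀ k, Metric.closedBall (c (k + 1)) (r (k + 1)) ⊆ Metric.closedBall (c k) (r k)) →
    (⋂ k, Metric.closedBall (c k) (r k)).Nonempty

section UN
variable {𝕂 : Type*} [NormedField 𝕂] {V : Type*} [AddCommGroup V] [Module 𝕂 V]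
  {η : V → ℝ}

lemma un_zero (h : IsUltraNorm 𝕂 η) : η 0 = 0 := (h.2.1 0).mpr rfl

lemma un_pos (h : IsUltraNorm 𝕂 η) {v : V} (hv : v ≠ 0) : 0 < η v :=
  lt_of_le_of_ne (h.1 v) (fun e => hv ((h.2.1 v).mp e.symm))

lemma un_neg (h : IsUltraNorm 𝕂 η) (v : V) : η (-v) = η v := by
  have := h.2.2.1 (-1 : 𝕂) v
  simpa [norm_neg] using this

lemma un_sub_le (h : IsUltraNorm 𝕂 η) (u v : V) : η (u - v) ≤ max (η u) (η v) := by
  rw [sub_eq_add_neg]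
  refine le_trans (h.2.2.2 u (-v)) ?_
  rw [un_neg h]

lemma un_sum_le (h : IsUltraNorm 𝕂 η) {ι : Type*} (s : Finset ι) (f : ι → V) {B : ℝ}
    (hB : 0 ≤ B) (hf : ∀ i ∈ s, η (f i) ≤ B) : η (∑ i ∈ s, f i) ≤ B := by
  induction s using Finset.cons_induction with
  | empty => simpa [un_zero h] using hB
  | cons a s ha ih =>
    rw [Finset.sum_cons]
    refine le_trans (h.2.2.2 _ _) (max_le (hf a (Finset.mem_cons_self a s)) ?_)
    exact ih fun i hi => hf i (Finset.mem_cons_of_mem hi)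

end UN

noncomputable def snK {𝕂 : Type*} [NormedField 𝕂] {n : ℕ} (v : Fin n → 𝕂) : ℝ :=
  ((Finset.univ.sup fun i => ‖v i‖₊ : NNReal) : ℝ)

section SN
variable {𝕂 : Type*} [NormedField 𝕂] {n : ℕ}

lemma snK_nonneg (v : Fin n → 𝕂) : 0 ≤ snK v := NNReal.coe_nonneg _

lemma coord_le_snK (v : Fin n → 𝕂) (i : Fin n) : ‖v i‖ ≤ snK v := by
  have : ‖v i‖₊ ≤ Finset.univ.sup fun i => ‖v i‖₊ :=
    Finset.le_sup (f := fun i => ‖v i‖₊) (Finset.mem_univ i)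
  exact_mod_cast this

lemma snK_le {v : Fin n → 𝕂} {B : ℝ} (hB : 0 ≤ B) (h : ∀ i, ‖v i‖ ≤ B) : snK v ≤ B := by
  have : (Finset.univ.sup fun i => ‖v i‖₊) ≤ ⟨B, hB⟩ :=
    Finset.sup_le fun i _ => by exact (NNReal.coe_le_coe (r₁ := ‖v i‖₊) (r₂ := ⟨B, hB⟩)).mp (h i)
  exact_mod_cast this

lemma snK_eq_zero {v : Fin n → 𝕂} : snK v = 0 ↔ v = 0 := by
  constructor
  · intro h
    funext i
    have := coord_le_snK v i
    rw [h] at this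
    simpa using norm_le_zero_iff.mp this
  · intro h
    subst h
    refine le_antisymm (snK_le le_rfl fun i => by simp) (snK_nonneg _)

lemma snK_smul (α : 𝕂) (v : Fin n → 𝕂) : snK (α • v) = ‖α‖ * snK v := by
  unfold snK
  rw [show ‖α‖ = ((‖α‖₊ : NNReal) : ℝ) from rfl, ← NNReal.coe_mul, NNReal.coe_inj,
    NNReal.mul_finset_sup]
  congr 1
  funext i
  simp [nnnorm_mul]

lemma snK_add_le [IsUltrametricDist 𝕂] (u v : Fin n → 𝕂) :
    snK (u + v) ≤ max (snK u) (snK v) := by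
  refine snK_le (le_max_of_le_left (snK_nonneg u)) fun i => ?_
  calc ‖(u + v) i‖ = ‖u i + v i‖ := rfl
    _ ≤ max ‖u i‖ ‖v i‖ := IsUltrametricDist.norm_add_le_max _ _
    _ ≤ max (snK u) (snK v) := max_le_max (coord_le_snK u i) (coord_le_snK v i)

lemma snK_snoc (w : Fin n → 𝕂) (b : 𝕂) : snK (Fin.snoc w b) = max ‖b‖ (snK w) := by
  unfold snK
  rw [Fin.univ_castSuccEmb, Finset.sup_cons, Finset.sup_map,
    show ‖b‖ = ((‖b‖₊ : NNReal) : ℝ) from rfl, ← NNReal.coe_max, NNReal.coe_inj]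
  congr 1
  · simp
  · congr 1
    funext i
    simp

end SN

section AB
variable {𝕂 : Type*} [NormedField 𝕂]

lemma upperA {n : ℕ} {η : (Fin n → 𝕂) → ℝ} (h : IsUltraNorm 𝕂 η) :
    ∃ C > 0, ∀ v, η v ≤ C * snK v := by
  set C : ℝ := 1 + ∑ i : Fin n, η (Pi.single i 1) with hC
  have hC0 : 0 < C := by
    have : 0 ≤ ∑ i : Fin n, η (Pi.single i 1) :=
      Finset.sum_nonneg fun i _ => h.1 _
    linarith
  refine ⟨C, hC0, fun v => ?_⟩
  have hsingle : ∀ i, η (Pi.single i 1) ≤ C := by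
    intro i
    have h1 : η (Pi.single i 1) ≤ ∑ j : Fin n, η (Pi.single j 1) :=
      Finset.single_le_sum (f := fun j => η (Pi.single j 1)) (fun j _ => h.1 _) (Finset.mem_univ i)
    linarith
  have hv : v = ∑ i : Fin n, (v i) • (Pi.single i (1:𝕂) : Fin n → 𝕂) := by
    funext j
    rw [Finset.sum_apply]
    simp [Pi.single_apply, eq_comm]
  have key := un_sum_le h Finset.univ (fun i => v i • (Pi.single i (1:𝕂) : Fin n → 𝕂))
    (B := C * snK v) (mul_nonneg hC0.le (snK_nonneg v)) (fun i _ => by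
      rw [h.2.2.1]
      calc ‖v i‖ * η (Pi.single i 1) ≤ snK v * C :=
            mul_le_mul (coord_le_snK v i) (hsingle i) (h.1 _) (snK_nonneg v)
        _ = C * snK v := mul_comm _ _)
  rwa [← hv] at key
end AB

open Filter Topology in
lemma lowerB {𝕂 : Type*} [NormedField 𝕂] [CompleteSpace 𝕂] (n : ℕ) :
    ∀ (η : (Fin n → 𝕂) → ℝ), IsUltraNorm 𝕂 η → ∃ c > 0, ∀ v, c * snK v ≤ η v := by
  induction n with
  | zero =>
    intro η h
    refine ⟨1, one_pos, fun v => ?_⟩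
    have hv : v = 0 := funext fun i => i.elim0
    rw [hv, un_zero h, snK_eq_zero.mpr rfl]
    norm_num
  | succ n ih =>
    intro η h
    set ηW : (Fin n → 𝕂) → ℝ := fun w => η (Fin.snoc w 0) with hηWdef
    have hηW : IsUltraNorm 𝕂 ηW := by
      refine ⟨fun w => h.1 _, fun w => ?_, fun α w => ?_, fun u v => ?_⟩
      · rw [hηWdef]
        simp only
        rw [h.2.1]
        constructor
        · intro hz
          funext i
          have := congrFun hz (Fin.castSucc i)
          simpa using this
        · intro hz
          subst hz
          funext i
          induction i using Fin.lastCases <;> simp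
      · show η _ = ‖α‖ * η _
        rw [← h.2.2.1]
        congr 1
        funext i
        induction i using Fin.lastCases <;> simp
      · show η _ ≤ max (η _) (η _)
        have he : (Fin.snoc (u + v) 0 : Fin (n+1) → 𝕂) = Fin.snoc u 0 + Fin.snoc v 0 := by
          funext i
          induction i using Fin.lastCases <;> simp
        rw [he]
        exact h.2.2.2 _ _
    obtain ⟨cW, hcW0, hcW⟩ := ih ηW hηW
    obtain ⟨CW, hCW0, hCW⟩ := upperA hηW
    set g : (Fin n → 𝕂) → (Fin (n+1) → 𝕂) := fun w => Fin.snoc w 1 with hgdef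
    have hgsub : ∀ a b : Fin n → 𝕂, g a - g b = (Fin.snoc (a - b) 0 : Fin (n+1) → 𝕂) := by
      intro a b
      funext i
      induction i using Fin.lastCases <;> simp [hgdef]
    have hδ : ∃ δ > 0, ∀ w, δ ≤ η (g w) := by
      by_contra hcon
      push_neg at hcon
      choose w hw using fun k : ℕ => hcon ((1/2:ℝ)^k) (by positivity)
      have hdiff : ∀ k l, ηW (w k - w l) ≤ max ((1/2:ℝ)^k) ((1/2:ℝ)^l) := by
        intro k l
        show η _ ≤ _
        rw [show (Fin.snoc (w k - w l) 0 : Fin (n+1) → 𝕂) = g (w k) - g (w l) from (hgsub _ _).symm]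
        exact le_trans (un_sub_le h _ _) (max_le_max (hw k).le (hw l).le)
      have hsn : ∀ k l, snK (w k - w l) ≤ cW⁻¹ * max ((1/2:ℝ)^k) ((1/2:ℝ)^l) := by
        intro k l
        have h1 := le_trans (hcW (w k - w l)) (hdiff k l)
        calc snK (w k - w l) = cW⁻¹ * (cW * snK (w k - w l)) := by field_simp
          _ ≤ cW⁻¹ * max ((1/2:ℝ)^k) ((1/2:ℝ)^l) :=
            mul_le_mul_of_nonneg_left h1 (inv_nonneg.mpr hcW0.le)
      have hcauchy : ∀ i, CauchySeq (fun k => w k i) := by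
        intro i
        apply cauchySeq_of_le_geometric (1/2:ℝ) cW⁻¹ (by norm_num)
        intro k
        rw [dist_eq_norm]
        have h1 : ‖(w k - w (k+1)) i‖ ≤ snK (w k - w (k+1)) := coord_le_snK _ i
        have h2 := hsn k (k+1)
        have h3 : max ((1/2:ℝ)^k) ((1/2:ℝ)^(k+1)) = (1/2:ℝ)^k :=
          max_eq_left (pow_le_pow_of_le_one (by norm_num) (by norm_num) (Nat.le_succ k))
        rw [h3] at h2
        calc ‖w k i - w (k+1) i‖ = ‖(w k - w (k+1)) i‖ := by simp
          _ ≤ snK (w k - w (k+1)) := h1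
          _ ≤ cW⁻¹ * (1/2:ℝ)^k := h2
      have hlims : ∀ i, ∃ x : 𝕂, Tendsto (fun k => w k i) atTop (𝓝 x) :=
        fun i => cauchySeq_tendsto_of_complete (hcauchy i)
      choose u hu using hlims
      have hclose : ∀ k, snK ((u : Fin n → 𝕂) - w k) ≤ cW⁻¹ * (1/2:ℝ)^k := by
        intro k
        refine snK_le (by positivity) fun i => ?_
        have ht : Tendsto (fun l => ‖w l i - w k i‖) atTop (𝓝 ‖u i - w k i‖) :=
          ((hu i).sub tendsto_const_nhds).norm
        have hb : ∀ l ≥ k, ‖w l i - w k i‖ ≤ cW⁻¹ * (1/2:ℝ)^k := by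
          intro l hl
          have h1 : ‖(w l - w k) i‖ ≤ snK (w l - w k) := coord_le_snK _ i
          have h2 := hsn l k
          have h3 : max ((1/2:ℝ)^l) ((1/2:ℝ)^k) = (1/2:ℝ)^k :=
            max_eq_right (pow_le_pow_of_le_one (by norm_num) (by norm_num) hl)
          rw [h3] at h2
          calc ‖w l i - w k i‖ = ‖(w l - w k) i‖ := by simp
            _ ≤ cW⁻¹ * (1/2:ℝ)^k := le_trans h1 h2
        have := le_of_tendsto ht (eventually_atTop.mpr ⟨k, hb⟩)
        simpa using this
      have hgu : ∀ k : ℕ, η (g u) ≤ max ((1/2:ℝ)^k) (CW * (cW⁻¹ * (1/2:ℝ)^k)) := by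
        intro k
        have hsplit : g u = g (w k) + (Fin.snoc (u - w k) 0 : Fin (n+1) → 𝕂) := by
          rw [← hgsub u (w k)]
          abel
        rw [hsplit]
        refine le_trans (h.2.2.2 _ _) (max_le_max (hw k).le ?_)
        calc η (Fin.snoc (u - w k) 0 : _) = ηW (u - w k) := rfl
          _ ≤ CW * snK (u - w k) := hCW _
          _ ≤ CW * (cW⁻¹ * (1/2:ℝ)^k) :=
            mul_le_mul_of_nonneg_left (hclose k) hCW0.le
      have t1 : Tendsto (fun k : ℕ => (1/2:ℝ)^k) atTop (𝓝 0) :=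
        tendsto_pow_atTop_nhds_zero_of_lt_one (by norm_num) (by norm_num)
      have t2 : Tendsto (fun k : ℕ => max ((1/2:ℝ)^k) (CW * (cW⁻¹ * (1/2:ℝ)^k)))
          atTop (𝓝 (max 0 (CW * (cW⁻¹ * 0)))) :=
        t1.max (tendsto_const_nhds.mul (tendsto_const_nhds.mul t1))
      simp only [mul_zero, max_self] at t2
      have h0 : η (g u) ≤ 0 := ge_of_tendsto' t2 hgu
      have hgu0 : g u = 0 := (h.2.1 _).mp (le_antisymm h0 (h.1 _))
      have h1 : (1:𝕂) = 0 := by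
        have := congrFun hgu0 (Fin.last n)
        simpa [hgdef] using this
      exact one_ne_zero h1
    obtain ⟨δ, hδ0, hδle⟩ := hδ
    set E : ℝ := η (Fin.snoc (0 : Fin n → 𝕂) (1:𝕂)) with hEdef
    have hE0 : 0 ≤ E := h.1 _
    set K : ℝ := max 1 (E / δ) with hKdef
    set D : ℝ := max δ⁻¹ (cW⁻¹ * K) with hDdef
    have hD0 : 0 < D := lt_of_lt_of_le (inv_pos.mpr hδ0) (le_max_left _ _)
    refine ⟨min cW D⁻¹, lt_min hcW0 (inv_pos.mpr hD0), fun v => ?_⟩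
    set a : 𝕂 := v (Fin.last n) with hadef
    have hsnv : snK v = max ‖a‖ (snK (Fin.init v)) := by
      conv_lhs => rw [← Fin.snoc_init_self v]
      rw [snK_snoc]
    by_cases ha : a = 0
    · have hv0 : (Fin.snoc (Fin.init v) 0 : Fin (n+1) → 𝕂) = v := by
        rw [← ha]
        exact Fin.snoc_init_self v
      have h1 : cW * snK (Fin.init v) ≤ η v := by
        calc cW * snK (Fin.init v) ≤ ηW (Fin.init v) := hcW _
          _ = η v := by show η _ = η v; rw [hv0]
      have h2 : snK v = snK (Fin.init v) := by
        rw [hsnv, ha, norm_zero]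
        exact max_eq_right (snK_nonneg _)
      calc min cW D⁻¹ * snK v ≤ cW * snK v :=
            mul_le_mul_of_nonneg_right (min_le_left _ _) (snK_nonneg v)
        _ = cW * snK (Fin.init v) := by rw [h2]
        _ ≤ η v := h1
    · have hva : v = a • (Fin.snoc (a⁻¹ • Fin.init v) 1 : Fin (n+1) → 𝕂) := by
        funext i
        induction i using Fin.lastCases with
        | last => simp [hadef]
        | cast i =>
          simp only [Pi.smul_apply, Fin.snoc_castSucc, smul_eq_mul]
          rw [← mul_assoc, mul_inv_cancel₀ ha, one_mul]
          rfl
      have hηv : η v = ‖a‖ * η (Fin.snoc (a⁻¹ • Fin.init v) 1 : _) := by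
        conv_lhs => rw [hva]
        exact h.2.2.1 _ _
      have hδv : ‖a‖ * δ ≤ η v := by
        rw [hηv]
        exact mul_le_mul_of_nonneg_left (hδle _) (norm_nonneg a)
      have hna : ‖a‖ ≤ δ⁻¹ * η v := by
        rw [← le_div_iff₀ hδ0] at hδv
        rwa [div_eq_inv_mul] at hδv
      have hsplit2 : (Fin.snoc (Fin.init v) 0 : Fin (n+1) → 𝕂) = v - a • (Fin.snoc (0 : Fin n → 𝕂) 1 : Fin (n+1) → 𝕂) := by
        funext i
        induction i using Fin.lastCases with
        | last => simp [hadef]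
        | cast i => simp [Fin.init]
      have hE : η (a • (Fin.snoc (0 : Fin n → 𝕂) 1 : Fin (n+1) → 𝕂)) = ‖a‖ * E := h.2.2.1 _ _
      have h2 : ηW (Fin.init v) ≤ max (η v) (‖a‖ * E) := by
        show η _ ≤ _
        rw [hsplit2]
        refine le_trans (un_sub_le h _ _) ?_
        rw [hE]
      have h4 : ηW (Fin.init v) ≤ K * η v := by
        refine le_trans h2 (max_le ?_ ?_)
        · calc η v = 1 * η v := (one_mul _).symm
            _ ≤ K * η v := mul_le_mul_of_nonneg_right (le_max_left _ _) (h.1 v)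
        · calc ‖a‖ * E ≤ δ⁻¹ * η v * E := mul_le_mul_of_nonneg_right hna hE0
            _ = (E / δ) * η v := by ring
            _ ≤ K * η v := mul_le_mul_of_nonneg_right (le_max_right _ _) (h.1 v)
      have h5 : snK (Fin.init v) ≤ cW⁻¹ * (K * η v) := by
        have h6 : cW * snK (Fin.init v) ≤ K * η v := le_trans (hcW _) h4
        calc snK (Fin.init v) = cW⁻¹ * (cW * snK (Fin.init v)) := by field_simp
          _ ≤ cW⁻¹ * (K * η v) := mul_le_mul_of_nonneg_left h6 (inv_nonneg.mpr hcW0.le)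
      have hsb : snK v ≤ D * η v := by
        rw [hsnv]
        refine max_le ?_ ?_
        · calc ‖a‖ ≤ δ⁻¹ * η v := hna
            _ ≤ D * η v := mul_le_mul_of_nonneg_right (le_max_left _ _) (h.1 v)
        · calc snK (Fin.init v) ≤ cW⁻¹ * (K * η v) := h5
            _ = (cW⁻¹ * K) * η v := by ring
            _ ≤ D * η v := mul_le_mul_of_nonneg_right (le_max_right _ _) (h.1 v)
      calc min cW D⁻¹ * snK v ≤ D⁻¹ * snK v :=
            mul_le_mul_of_nonneg_right (min_le_right _ _) (snK_nonneg v)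
        _ ≤ D⁻¹ * (D * η v) := mul_le_mul_of_nonneg_left hsb (inv_nonneg.mpr hD0.le)
        _ = η v := by field_simp

lemma un_equiv {𝕂 : Type*} [NormedField 𝕂] [CompleteSpace 𝕂] {V : Type*} [AddCommGroup V]
    [Module 𝕂 V] [FiniteDimensional 𝕂 V] {η η' : V → ℝ}
    (hη : IsUltraNorm 𝕂 η) (hη' : IsUltraNorm 𝕂 η') : ∃ C > 0, ∀ v, η v ≤ C * η' v := by
  set b := Module.finBasis 𝕂 V with hbdef
  set e := b.equivFun with hedef
  have pull : ∀ (θ : V → ℝ), IsUltraNorm 𝕂 θ →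
      IsUltraNorm 𝕂 (fun x : Fin (Module.finrank 𝕂 V) → 𝕂 => θ (e.symm x)) := by
    intro θ hθ
    refine ⟨fun x => hθ.1 _, fun x => ?_, fun α x => ?_, fun x y => ?_⟩
    · rw [hθ.2.1, LinearEquiv.map_eq_zero_iff]
    · show θ (e.symm (α • x)) = ‖α‖ * θ (e.symm x)
      rw [map_smul, hθ.2.2.1]
    · show θ (e.symm (x + y)) ≤ max (θ (e.symm x)) (θ (e.symm y))
      rw [map_add]; exact hθ.2.2.2 _ _
  obtain ⟨C1, hC10, hC1⟩ := upperA (pull η hη)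
  obtain ⟨c2, hc20, hc2⟩ := lowerB _ _ (pull η' hη')
  refine ⟨C1 * c2⁻¹, by positivity, fun v => ?_⟩
  have h1 : η v ≤ C1 * snK (e v) := by
    have := hC1 (e v); simpa using this
  have h2 : c2 * snK (e v) ≤ η' v := by
    have := hc2 (e v); simpa using this
  have h3 : snK (e v) ≤ c2⁻¹ * η' v := by
    calc snK (e v) = c2⁻¹ * (c2 * snK (e v)) := by field_simp
      _ ≤ c2⁻¹ * η' v := mul_le_mul_of_nonneg_left h2 (inv_nonneg.mpr hc20.le)
  calc η v ≤ C1 * snK (e v) := h1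
    _ ≤ C1 * (c2⁻¹ * η' v) := mul_le_mul_of_nonneg_left h3 hC10.le
    _ = C1 * c2⁻¹ * η' v := (mul_assoc _ _ _).symm

lemma exp_shift {R x y : ℝ} : Real.exp (-R) * x ≤ y ↔ x ≤ Real.exp R * y := by
  rw [Real.exp_neg, inv_mul_le_iff₀ (Real.exp_pos R)]

lemma abs_log_div_le_iff {x y r : ℝ} (hx : 0 < x) (hy : 0 < y) :
    |Real.log (x / y)| ≤ r ↔ x ≤ Real.exp r * y ∧ y ≤ Real.exp r * x := by
  rw [abs_le, Real.log_div hx.ne' hy.ne']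
  constructor
  · rintro ⟨h1, h2⟩
    constructor
    · calc x = Real.exp (Real.log x) := (Real.exp_log hx).symm
        _ ≤ Real.exp (r + Real.log y) := Real.exp_le_exp.mpr (by linarith)
        _ = Real.exp r * y := by rw [Real.exp_add, Real.exp_log hy]
    · calc y = Real.exp (Real.log y) := (Real.exp_log hy).symm
        _ ≤ Real.exp (r + Real.log x) := Real.exp_le_exp.mpr (by linarith)
        _ = Real.exp r * x := by rw [Real.exp_add, Real.exp_log hx]
  · rintro ⟨h1, h2⟩
    have e1 := Real.log_le_log hx h1
    rw [Real.log_mul (Real.exp_ne_zero r) hy.ne', Real.log_exp] at e1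
    have e2 := Real.log_le_log hy h2
    rw [Real.log_mul (Real.exp_ne_zero r) hx.ne', Real.log_exp] at e2
    exact ⟨by linarith, by linarith⟩

open Filter Topology in
lemma complete_of_sc {𝕂 : Type*} [MetricSpace 𝕂] (hsc : SphericallyComplete 𝕂) :
    CompleteSpace 𝕂 := by
  apply Metric.complete_of_cauchySeq_tendsto
  intro u hu
  have h2 : ∀ k : ℕ, ∃ N, ∀ m ≥ N, ∀ n ≥ N, dist (u m) (u n) < (1/2 : ℝ) ^ k := by
    intro k
    rcases Metric.cauchySeq_iff.mp hu ((1/2 : ℝ) ^ k) (by positivity) with ⟨N, hN⟩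
    exact ⟨N, hN⟩
  choose N hN using h2
  set M : ℕ → ℕ := fun k => (Finset.range (k + 1)).sup N with hM
  have hMmono : Monotone M := fun a b hab =>
    Finset.sup_mono (Finset.range_subset_range.mpr (by omega))
  have hMN : ∀ k, N k ≤ M k := fun k =>
    Finset.le_sup (Finset.self_mem_range_succ k)
  have hkey : ∀ k, ∀ m ≥ M k, ∀ n ≥ M k, dist (u m) (u n) < (1/2:ℝ)^k := by
    intro k m hm n hn
    exact hN k m (le_trans (hMN k) hm) n (le_trans (hMN k) hn)
  have hnest : ∀ k, Metric.closedBall (u (M (k+1))) (2 * (1/2:ℝ)^(k+1)) ⊆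
      Metric.closedBall (u (M k)) (2 * (1/2:ℝ)^k) := by
    intro k x hx
    simp only [Metric.mem_closedBall] at hx ⊢
    have h1 : dist (u (M (k+1))) (u (M k)) < (1/2:ℝ)^k :=
      hkey k _ (hMmono (Nat.le_succ k)) _ le_rfl
    calc dist x (u (M k)) ≤ dist x (u (M (k+1))) + dist (u (M (k+1))) (u (M k)) :=
          dist_triangle _ _ _
      _ ≤ 2 * (1/2:ℝ)^(k+1) + (1/2:ℝ)^k := by linarith
      _ = 2 * (1/2:ℝ)^k := by ring
  obtain ⟨y, hy⟩ := hsc (fun k => u (M k)) (fun k => 2 * (1/2:ℝ)^k) hnest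
  simp only [Set.mem_iInter, Metric.mem_closedBall] at hy
  refine ⟨y, Metric.tendsto_atTop.mpr fun ε hε => ?_⟩
  obtain ⟨k, hk⟩ := exists_pow_lt_of_lt_one (by linarith : (0:ℝ) < ε/4) (by norm_num : (1/2:ℝ) < 1)
  refine ⟨M k, fun n hn => ?_⟩
  have h1 : dist (u n) (u (M k)) < (1/2:ℝ)^k := hkey k n hn _ le_rfl
  calc dist (u n) y ≤ dist (u n) (u (M k)) + dist (u (M k)) y := dist_triangle _ _ _
    _ ≤ (1/2:ℝ)^k + 2 * (1/2:ℝ)^k := by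
        have := hy k; rw [dist_comm] at this; linarith
    _ < ε := by linarith

/-- Theorem 3.2 (Helly part): for the set of all ultrametric norms on a
finite-dimensional vector space over a spherically complete non-Archimedean
valued field, closed balls of the Goldman–Iwahori metric satisfy the Helly
property. -/
theorem ultranorms_helly
    {𝕂 : Type*} [NormedField 𝕂] [IsUltrametricDist 𝕂] (hsc : SphericallyComplete 𝕂)
    {V : Type*} [AddCommGroup V] [Module 𝕂 V] [FiniteDimensional 𝕂 V]
    {ι : Type*} (c : ι → V → ℝ) (hc : ∀ i, IsUltraNorm 𝕂 (c i))
    (r : ι → ℝ) (hr : ∀ i, 0 ≤ r i)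
    (hpair : ∀ i j, ∃ θ, IsUltraNorm 𝕂 θ ∧ GIdist (c i) θ ≤ r i ∧ GIdist (c j) θ ≤ r j) :
    ∃ θ, IsUltraNorm 𝕂 θ ∧ ∀ i, GIdist (c i) θ ≤ r i := by
  have _inst : CompleteSpace 𝕂 := complete_of_sc hsc
  rcases isEmpty_or_nonempty ι with hempty | hne
  · set b := Module.finBasis 𝕂 V with hbdef
    refine ⟨fun v => snK (b.equivFun v),
      ⟨fun v => snK_nonneg _, fun v => ?_, fun α v => ?_, fun u v => ?_⟩,
      fun i => hempty.elim i⟩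
    · rw [snK_eq_zero, LinearEquiv.map_eq_zero_iff]
    · show snK (b.equivFun (α • v)) = ‖α‖ * snK (b.equivFun v)
      rw [map_smul, snK_smul]
    · show snK (b.equivFun (u + v)) ≤ max (snK (b.equivFun u)) (snK (b.equivFun v))
      rw [map_add]; exact snK_add_le _ _
  · obtain ⟨j₀⟩ := hne
    haveI : Nonempty ι := ⟨j₀⟩
    have hbdd : ∀ (η η' : V → ℝ), IsUltraNorm 𝕂 η → IsUltraNorm 𝕂 η' →
        BddAbove (Set.range fun v : {v : V // v ≠ 0} => |Real.log (η v.1 / η' v.1)|) := by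
      intro η η' hη hη'
      obtain ⟨C, hC0, hC⟩ := un_equiv hη hη'
      obtain ⟨C', hC'0, hC'⟩ := un_equiv hη' hη
      refine ⟨max (Real.log C) (Real.log C'), ?_⟩
      rintro x ⟨⟨v, hv⟩, rfl⟩
      have hηv := un_pos hη hv
      have hη'v := un_pos hη' hv
      have h1 : Real.log (η v / η' v) ≤ Real.log C :=
        Real.log_le_log (div_pos hηv hη'v) ((div_le_iff₀ hη'v).mpr (hC v))
      have h2 : Real.log (η' v / η v) ≤ Real.log C' :=
        Real.log_le_log (div_pos hη'v hηv) ((div_le_iff₀ hηv).mpr (hC' v))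
      have h3 : Real.log (η' v / η v) = -Real.log (η v / η' v) := by
        rw [Real.log_div hη'v.ne' hηv.ne', Real.log_div hηv.ne' hη'v.ne']
        ring
      rw [h3] at h2
      rw [abs_le']
      constructor
      · exact le_trans h1 (le_max_left _ _)
      · exact le_trans (by linarith) (le_max_right _ _ : Real.log C' ≤ _)
    have key : ∀ i j (v : V), Real.exp (-(r i)) * c i v ≤ Real.exp (r j) * c j v := by
      intro i j v
      by_cases hv : v = 0
      · subst hv
        rw [un_zero (hc i), un_zero (hc j)]
        simp
      obtain ⟨θ, hθ, hdi, hdj⟩ := hpair i j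
      have hθv := un_pos hθ hv
      have hpti : |Real.log (c i v / θ v)| ≤ r i :=
        le_trans (le_ciSup (hbdd (c i) θ (hc i) hθ) ⟨v, hv⟩) hdi
      have hptj : |Real.log (c j v / θ v)| ≤ r j :=
        le_trans (le_ciSup (hbdd (c j) θ (hc j) hθ) ⟨v, hv⟩) hdj
      obtain ⟨hi1, hi2⟩ := (abs_log_div_le_iff (un_pos (hc i) hv) hθv).mp hpti
      obtain ⟨hj1, hj2⟩ := (abs_log_div_le_iff (un_pos (hc j) hv) hθv).mp hptj
      calc Real.exp (-(r i)) * c i v ≤ θ v := exp_shift.mpr hi1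
        _ ≤ Real.exp (r j) * c j v := hj2
    set θ : V → ℝ := fun v => ⨆ i, Real.exp (-(r i)) * c i v with hθdef
    have hbddi : ∀ v : V, BddAbove (Set.range fun i => Real.exp (-(r i)) * c i v) :=
      fun v => ⟨Real.exp (r j₀) * c j₀ v, by rintro x ⟨i, rfl⟩; exact key i j₀ v⟩
    have hle : ∀ i v, Real.exp (-(r i)) * c i v ≤ θ v :=
      fun i v => le_ciSup (hbddi v) i
    have hub : ∀ i v, θ v ≤ Real.exp (r i) * c i v :=
      fun i v => ciSup_le fun k => key k i v
    have hθnn : ∀ v, 0 ≤ θ v := fun v =>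
      le_trans (mul_nonneg (Real.exp_pos _).le ((hc j₀).1 v)) (hle j₀ v)
    have hθpos : ∀ v : V, v ≠ 0 → 0 < θ v := fun v hv =>
      lt_of_lt_of_le (mul_pos (Real.exp_pos _) (un_pos (hc j₀) hv)) (hle j₀ v)
    have hθnorm : IsUltraNorm 𝕂 θ := by
      refine ⟨hθnn, fun v => ?_, fun α v => ?_, fun u v => ?_⟩
      · constructor
        · intro h0
          by_contra hv
          exact absurd h0 (ne_of_gt (hθpos v hv))
        · intro hv
          subst hv
          rw [hθdef]
          simp only [un_zero (hc _), mul_zero]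
          exact ciSup_const
      · show (⨆ i, Real.exp (-(r i)) * c i (α • v)) = ‖α‖ * ⨆ i, Real.exp (-(r i)) * c i v
        rw [Real.mul_iSup_of_nonneg (norm_nonneg α)]
        refine iSup_congr fun i => ?_
        rw [(hc i).2.2.1]
        ring
      · refine Real.iSup_le (fun i => ?_) (le_max_of_le_left (hθnn u))
        calc Real.exp (-(r i)) * c i (u + v)
            ≤ Real.exp (-(r i)) * max (c i u) (c i v) :=
              mul_le_mul_of_nonneg_left ((hc i).2.2.2 u v) (Real.exp_pos _).le
          _ = max (Real.exp (-(r i)) * c i u) (Real.exp (-(r i)) * c i v) :=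
              mul_max_of_nonneg _ _ (Real.exp_pos _).le
          _ ≤ max (θ u) (θ v) := max_le_max (hle i u) (hle i v)
    refine ⟨θ, hθnorm, fun i => ?_⟩
    refine Real.iSup_le (fun vv => ?_) (hr i)
    obtain ⟨v, hv⟩ := vv
    refine (abs_log_div_le_iff (un_pos (hc i) hv) (hθpos v hv)).mpr ⟨?_, ?_⟩
    · exact exp_shift.mp (hle i v)
    · exact hub i v
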